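/- Let Ω ⊆ ℝ² be an unbounded open convex set with finite inradius r_Ω < ∞. Then for every 0 < q < 1 one has h_q(Ω) = 0. -/

import Mathlib

open MeasureTheory Set Filter
open scoped ENNReal
open scoped RealInnerProductSpace NNReal Pointwise Topology

noncomputable section

/-- `E` has smooth boundary: near each boundary point, `E` is the sublevel set of a smooth
function with non-vanishing differential. -/
def HasSmoothBoundary {N : ℕ} (E : Set (EuclideanSpace ℝ (Fin N))) : Prop :=
  ∀ x ∈ frontier E, ∃ U : Set (EuclideanSpace ℝ (Fin N)), IsOpen U ∧ x ∈ U ∧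
    ∃ f : EuclideanSpace ℝ (Fin N) → ℝ, ContDiff ℝ (⊤ : ℕ∞) f ∧
      (∀ y ∈ U, (y ∈ E ↔ f y < 0)) ∧ (∀ y ∈ U, fderiv ℝ f y ≠ 0)

/-- The ratio `H^{N-1}(∂E) / |E|^{1/q}`. -/
def cheegerRatio {N : ℕ} (q : ℝ) (E : Set (EuclideanSpace ℝ (Fin N))) : ℝ :=
  (MeasureTheory.Measure.hausdorffMeasure ((N : ℝ) - 1) (frontier E)).toReal /
    (volume E).toReal ^ (1 / q)

/-- The generalized Cheeger constant `h_q(Ω)`. -/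
def cheeger {N : ℕ} (q : ℝ) (Ω : Set (EuclideanSpace ℝ (Fin N))) : ℝ :=
  sInf { r : ℝ | ∃ E : Set (EuclideanSpace ℝ (Fin N)), IsOpen E ∧ E.Nonempty ∧
    IsCompact (closure E) ∧ closure E ⊆ Ω ∧ HasSmoothBoundary E ∧ r = cheegerRatio q E }

/-- The sharp Poincaré–Sobolev constant `λ_{p,q}(Ω)`. -/
def poincare {N : ℕ} (p q : ℝ) (Ω : Set (EuclideanSpace ℝ (Fin N))) : ℝ :=
  sInf { r : ℝ | ∃ u : EuclideanSpace ℝ (Fin N) → ℝ, ContDiff ℝ (⊤ : ℕ∞) u ∧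
    HasCompactSupport u ∧ tsupport u ⊆ Ω ∧
    (∫ x in Ω, |u x| ^ q) = 1 ∧ r = ∫ x in Ω, ‖fderiv ℝ u x‖ ^ p }

/-- The inradius of `Ω`, as an extended nonnegative real. -/
def einradius {N : ℕ} (Ω : Set (EuclideanSpace ℝ (Fin N))) : ℝ≥0∞ :=
  ⨆ x ∈ Ω, EMetric.infEdist x Ωᶜ

/-- The inradius of `Ω`, as a real number. -/
def inradius {N : ℕ} (Ω : Set (EuclideanSpace ℝ (Fin N))) : ℝ :=
  (einradius Ω).toReal

/-- The high ridge set of `Ω`. -/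
def highRidge {N : ℕ} (Ω : Set (EuclideanSpace ℝ (Fin N))) : Set (EuclideanSpace ℝ (Fin N)) :=
  {x ∈ Ω | Metric.ball x (inradius Ω) ⊆ Ω}

/-- The volume of the unit ball of `ℝ^N`. -/
def ballVol (N : ℕ) : ℝ :=
  (volume (Metric.ball (0 : EuclideanSpace ℝ (Fin N)) 1)).toReal

abbrev E2 := EuclideanSpace ℝ (Fin 2)

lemma inner_e2 (x y : E2) : ⟪x, y⟫ = x 0 * y 0 + x 1 * y 1 := by
  simp [PiLp.inner_apply, Fin.sum_univ_two, RCLike.inner_apply, mul_comm]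

def rot (v : E2) : E2 := WithLp.toLp 2 ![-v 1, v 0]

lemma rot_apply0 (v : E2) : rot v 0 = -v 1 := rfl
lemma rot_apply1 (v : E2) : rot v 1 = v 0 := rfl

lemma norm_sq_e2 (v : E2) : ‖v‖^2 = v 0^2 + v 1^2 := by
  rw [← real_inner_self_eq_norm_sq, inner_e2]; ring

lemma decomp (v : E2) (hv : ‖v‖ = 1) (u : E2) :
    u = ⟪u, v⟫ • v + ⟪u, rot v⟫ • rot v := by
  have h : v 0^2 + v 1^2 = 1 := by rw [← norm_sq_e2, hv]; norm_num
  ext i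
  fin_cases i
  · simp [inner_e2, rot, PiLp.add_apply, PiLp.smul_apply, smul_eq_mul]
    linear_combination (-(u 0)) * h
  · simp [inner_e2, rot, PiLp.add_apply, PiLp.smul_apply, smul_eq_mul]
    linear_combination (-(u 1)) * h

lemma inner_vv (v : E2) (hv : ‖v‖ = 1) : ⟪v, v⟫ = 1 := by
  rw [real_inner_self_eq_norm_sq, hv]; norm_num

lemma norm_rot (v : E2) : ‖rot v‖ = ‖v‖ := by
  have h : ‖rot v‖^2 = ‖v‖^2 := by rw [norm_sq_e2, norm_sq_e2, rot_apply0, rot_apply1]; ring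
  nlinarith [norm_nonneg v, norm_nonneg (rot v)]

lemma inner_vw (v : E2) : ⟪v, rot v⟫ = 0 := by
  rw [inner_e2, rot_apply0, rot_apply1]; ring

lemma inner_ww (v : E2) (hv : ‖v‖ = 1) : ⟪rot v, rot v⟫ = 1 := by
  rw [real_inner_self_eq_norm_sq, norm_rot, hv]; norm_num

def eF (v c : E2) (a b : ℝ) (p : E2) : ℝ :=
  b^2 * ⟪p - c, v⟫^2 + a^2 * ⟪p - c, rot v⟫^2 - a^2 * b^2

def eE (v c : E2) (a b : ℝ) : Set E2 := {p | eF v c a b p < 0}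

lemma inner_sub_hasFDerivAt (c u : E2) (p : E2) :
    HasFDerivAt (fun p : E2 => ⟪p - c, u⟫) (innerSL ℝ u) p := by
  have h1 : HasFDerivAt (fun p : E2 => p - c) (ContinuousLinearMap.id ℝ E2) p :=
    (hasFDerivAt_id p).sub_const c
  have h2 := (innerSL ℝ u).hasFDerivAt.comp p h1
  simp only [ContinuousLinearMap.comp_id] at h2
  refine h2.congr_of_eventuallyEq (Filter.Eventually.of_forall fun y => ?_)
  exact real_inner_comm u (y - c)

lemma eF_hasFDerivAt (v c : E2) (a b : ℝ) (p : E2) :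
    HasFDerivAt (eF v c a b)
      ((b^2 * (2 * ⟪p - c, v⟫)) • innerSL ℝ v
        + (a^2 * (2 * ⟪p - c, rot v⟫)) • innerSL ℝ (rot v)) p := by
  have g1 := inner_sub_hasFDerivAt c v p
  have g2 := inner_sub_hasFDerivAt c (rot v) p
  have h1 := (g1.mul g1).const_mul (b^2)
  have h2 := (g2.mul g2).const_mul (a^2)
  have h3 := (h1.add h2).sub_const (a^2*b^2)
  have he : eF v c a b = fun p => b^2 * (⟪p - c, v⟫ * ⟪p - c, v⟫) + a^2 * (⟪p - c, rot v⟫ * ⟪p - c, rot v⟫) - a^2*b^2 := by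
    funext p; simp [eF]; ring
  rw [he]
  refine (h3.congr_of_eventuallyEq (Filter.Eventually.of_forall fun y => ?_)).congr_fderiv ?_
  · rfl
  ext u
  simp [ContinuousLinearMap.smul_apply, smul_eq_mul]
  ring

lemma eF_contDiff (v c : E2) (a b : ℝ) : ContDiff ℝ (⊤ : ℕ∞) (eF v c a b) := by
  have h : ∀ u : E2, ContDiff ℝ (⊤ : ℕ∞) (fun p : E2 => ⟪p - c, u⟫) := fun u =>
    (contDiff_id.sub contDiff_const).inner ℝ contDiff_const
  have : eF v c a b = fun p => b^2 * ((fun p : E2 => ⟪p - c, v⟫) p * (fun p : E2 => ⟪p - c, v⟫) p) + a^2 * ((fun p : E2 => ⟪p - c, rot v⟫) p * (fun p : E2 => ⟪p - c, rot v⟫) p) - a^2*b^2 := by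
    funext p; simp [eF]; ring
  rw [this]
  exact (((contDiff_const.mul ((h v).mul (h v))).add
    (contDiff_const.mul ((h (rot v)).mul (h (rot v))))).sub contDiff_const)

lemma eF_fderiv_ne_zero (v c : E2) (hv : ‖v‖ = 1) (a b : ℝ) (ha : 0 < a) (hb : 0 < b)
    (p : E2) (hp : p ≠ c) : fderiv ℝ (eF v c a b) p ≠ 0 := by
  intro h0
  rw [(eF_hasFDerivAt v c a b p).fderiv] at h0
  have hwv : ⟪rot v, v⟫ = 0 := by rw [real_inner_comm]; exact inner_vw v
  have hav := congrArg (fun L : E2 →L[ℝ] ℝ => L v) h0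
  have haw := congrArg (fun L : E2 →L[ℝ] ℝ => L (rot v)) h0
  simp only [ContinuousLinearMap.add_apply, ContinuousLinearMap.smul_apply,
    ContinuousLinearMap.zero_apply, innerSL_apply_apply, smul_eq_mul] at hav haw
  rw [inner_vv v hv, hwv] at hav
  rw [inner_vw v, inner_ww v hv] at haw
  have h1 : ⟪p - c, v⟫ = 0 := by
    have hb2 : (0:ℝ) < b^2 := by positivity
    nlinarith [hav]
  have h2 : ⟪p - c, rot v⟫ = 0 := by
    have ha2 : (0:ℝ) < a^2 := by positivity
    nlinarith [haw]
  have hd := decomp v hv (p - c)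
  rw [h1, h2] at hd
  simp at hd
  exact hp (by rwa [sub_eq_zero] at hd)

lemma eE_isOpen (v c : E2) (a b : ℝ) : IsOpen (eE v c a b) :=
  isOpen_lt (eF_contDiff v c a b).continuous continuous_const

lemma eE_mem_c (v c : E2) (a b : ℝ) (ha : 0 < a) (hb : 0 < b) : c ∈ eE v c a b := by
  simp [eE, eF]
  positivity

lemma eE_closure_subset (v c : E2) (a b : ℝ) :
    closure (eE v c a b) ⊆ {p | eF v c a b p ≤ 0} := by
  apply closure_minimal
  · intro p hp
    have hp' : eF v c a b p < 0 := hp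
    exact le_of_lt hp'
  · exact isClosed_le (eF_contDiff v c a b).continuous continuous_const

lemma eE_frontier_subset (v c : E2) (a b : ℝ) :
    frontier (eE v c a b) ⊆ {p | eF v c a b p = 0} := by
  intro p hp
  have h1 : eF v c a b p ≤ 0 := (eE_closure_subset v c a b) hp.1
  have h2 : ¬ eF v c a b p < 0 := by
    have := hp.2
    rw [(eE_isOpen v c a b).interior_eq] at this
    exact this
  exact le_antisymm h1 (not_lt.mp h2)

lemma eE_abs_le (v c : E2) (a b : ℝ) (ha : 0 < a) (hb : 0 < b)
    (p : E2) (hp : eF v c a b p ≤ 0) :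
    |⟪p - c, v⟫| ≤ a ∧ |⟪p - c, rot v⟫| ≤ b := by
  simp only [eF] at hp
  have hb2 : (0:ℝ) < b^2 := by positivity
  have ha2 : (0:ℝ) < a^2 := by positivity
  have hs2 : ⟪p - c, v⟫^2 ≤ a^2 := by nlinarith [sq_nonneg (⟪p - c, rot v⟫)]
  have ht2 : ⟪p - c, rot v⟫^2 ≤ b^2 := by nlinarith [sq_nonneg (⟪p - c, v⟫)]
  constructor
  · apply abs_le.mpr
    constructor
    · nlinarith [sq_nonneg (⟪p - c, v⟫ + a)]
    · nlinarith [sq_nonneg (⟪p - c, v⟫ - a)]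
  · apply abs_le.mpr
    constructor
    · nlinarith [sq_nonneg (⟪p - c, rot v⟫ + b)]
    · nlinarith [sq_nonneg (⟪p - c, rot v⟫ - b)]

lemma eE_norm_le (v c : E2) (hv : ‖v‖ = 1) (a b : ℝ) (ha : 0 < a) (hb : 0 < b)
    (p : E2) (hp : eF v c a b p ≤ 0) : ‖p - c‖ ≤ a + b := by
  obtain ⟨h1, h2⟩ := eE_abs_le v c a b ha hb p hp
  have hd := decomp v hv (p - c)
  calc ‖p - c‖ = ‖⟪p - c, v⟫ • v + ⟪p - c, rot v⟫ • rot v‖ := by rw [← hd]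
    _ ≤ ‖⟪p - c, v⟫ • v‖ + ‖⟪p - c, rot v⟫ • rot v‖ := norm_add_le _ _
    _ = |⟪p - c, v⟫| + |⟪p - c, rot v⟫| := by
        rw [norm_smul, norm_smul, norm_rot, hv, mul_one, mul_one, Real.norm_eq_abs,
          Real.norm_eq_abs]
    _ ≤ a + b := add_le_add h1 h2

lemma eE_compact_closure (v c : E2) (hv : ‖v‖ = 1) (a b : ℝ) (ha : 0 < a) (hb : 0 < b) :
    IsCompact (closure (eE v c a b)) := by
  apply (isCompact_closedBall c (a+b)).of_isClosed_subset isClosed_closure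
  intro p hp
  have h1 : eF v c a b p ≤ 0 := eE_closure_subset v c a b hp
  have := eE_norm_le v c hv a b ha hb p h1
  simpa [Metric.mem_closedBall, dist_eq_norm] using this

def γe (v c : E2) (a b : ℝ) (θ : ℝ) : E2 :=
  c + (a * Real.cos θ) • v + (b * Real.sin θ) • rot v

open Real in
lemma eE_zero_subset_image (v c : E2) (hv : ‖v‖ = 1) (a b : ℝ) (ha : 0 < a) (hb : 0 < b) :
    {p | eF v c a b p = 0} ⊆ γe v c a b '' Icc (-π) π := by
  intro p hp
  simp only [mem_setOf_eq, eF] at hp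
  set s := ⟪p - c, v⟫ with hs
  set t := ⟪p - c, rot v⟫ with ht
  have hp' : b^2 * s^2 + a^2 * t^2 = a^2 * b^2 := by linarith
  set x := s / a with hx
  set y := t / b with hy
  have hxy : x^2 + y^2 = 1 := by
    rw [hx, hy]
    field_simp
    nlinarith [hp']
  have hx1 : -1 ≤ x ∧ x ≤ 1 := by
    constructor <;> nlinarith [sq_nonneg y, sq_nonneg (x+1), sq_nonneg (x-1)]
  refine ⟨if 0 ≤ y then arccos x else -arccos x, ?_, ?_⟩
  · have h1 := arccos_nonneg x
    have h2 := arccos_le_pi x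
    have hπ := pi_pos
    split_ifs <;> constructor <;> linarith
  · have hcos : cos (if 0 ≤ y then arccos x else -arccos x) = x := by
      split_ifs <;> simp [cos_arccos hx1.1 hx1.2]
    have hsin : sin (if 0 ≤ y then arccos x else -arccos x) = y := by
      have hsq : √(1 - x^2) = |y| := by
        rw [show 1 - x^2 = y^2 by linarith, Real.sqrt_sq_eq_abs]
      split_ifs with h
      · rw [sin_arccos, hsq, abs_of_nonneg h]
      · rw [sin_neg, sin_arccos, hsq, abs_of_neg (not_le.mp h)]; ring
    have hd := decomp v hv (p - c)
    rw [← hs, ← ht] at hd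
    simp only [γe, hcos, hsin]
    have hax : a * x = s := by rw [hx]; field_simp
    have hby : b * y = t := by rw [hy]; field_simp
    rw [hax, hby]
    rw [add_assoc, ← hd]
    abel

open Real in
lemma γe_hasDerivAt (v c : E2) (a b θ : ℝ) :
    HasDerivAt (γe v c a b) ((a * -sin θ) • v + (b * cos θ) • rot v) θ := by
  have h1 : HasDerivAt (fun θ => (a * cos θ) • v) ((a * -sin θ) • v) θ :=
    ((Real.hasDerivAt_cos θ).const_mul a).smul_const v
  have h2 : HasDerivAt (fun θ => (b * sin θ) • rot v) ((b * cos θ) • rot v) θ :=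
    ((Real.hasDerivAt_sin θ).const_mul b).smul_const (rot v)
  have := (h1.add h2).const_add c
  refine this.congr_of_eventuallyEq (Filter.Eventually.of_forall fun θ => ?_)
  simp [γe, add_assoc]

open Real in
lemma γe_lipschitz (v c : E2) (hv : ‖v‖ = 1) (a b : ℝ) (ha : 0 < a) (hb : 0 < b) :
    LipschitzWith ((a+b).toNNReal) (γe v c a b) := by
  apply lipschitzWith_of_nnnorm_deriv_le
  · exact fun θ => (γe_hasDerivAt v c a b θ).differentiableAt
  · intro θ
    rw [(γe_hasDerivAt v c a b θ).deriv, ← NNReal.coe_le_coe]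
    rw [coe_nnnorm, Real.coe_toNNReal _ (by linarith)]
    have e1 : ‖(a * -sin θ) • v‖ ≤ a := by
      rw [norm_smul, hv, mul_one, Real.norm_eq_abs, abs_mul, abs_neg, abs_of_pos ha]
      nlinarith [abs_sin_le_one θ, abs_nonneg (sin θ)]
    have e2 : ‖(b * cos θ) • rot v‖ ≤ b := by
      rw [norm_smul, norm_rot, hv, mul_one, Real.norm_eq_abs, abs_mul, abs_of_pos hb]
      nlinarith [abs_cos_le_one θ, abs_nonneg (cos θ)]
    exact (norm_add_le _ _).trans (add_le_add e1 e2)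

open Real in
lemma eE_H1_bound (v c : E2) (hv : ‖v‖ = 1) (a b : ℝ) (ha : 0 < a) (hb : 0 < b) :
    μH[1] (frontier (eE v c a b)) ≤ ENNReal.ofReal ((a + b) * (2 * π)) := by
  have h1 : frontier (eE v c a b) ⊆ γe v c a b '' Icc (-π) π :=
    (eE_frontier_subset v c a b).trans (eE_zero_subset_image v c hv a b ha hb)
  calc μH[1] (frontier (eE v c a b)) ≤ μH[1] (γe v c a b '' Icc (-π) π) := measure_mono h1
    _ ≤ ((a+b).toNNReal : ℝ≥0∞) ^ (1:ℝ) * μH[1] (Icc (-π) π) :=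
        (γe_lipschitz v c hv a b ha hb).hausdorffMeasure_image_le (by norm_num) _
    _ = ENNReal.ofReal (a + b) * ENNReal.ofReal (2 * π) := by
        rw [MeasureTheory.hausdorffMeasure_real, Real.volume_Icc, ENNReal.rpow_one,
          show π - -π = 2 * π by ring]
        rfl
    _ = ENNReal.ofReal ((a + b) * (2 * π)) := (ENNReal.ofReal_mul (by linarith)).symm

def obV (v : E2) (hv : ‖v‖ = 1) : OrthonormalBasis (Fin 2) ℝ E2 :=
  OrthonormalBasis.mk (v := ![v, rot v])
    (by
      rw [orthonormal_iff_ite]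
      intro i j
      fin_cases i <;> fin_cases j
      · simpa using inner_vv v hv
      · simpa using inner_vw v
      · rw [real_inner_comm]; simpa using inner_vw v
      · simpa using inner_ww v hv)
    (by
      intro u _
      have hd := decomp v hv u
      rw [hd]
      exact Submodule.add_mem _
        (Submodule.smul_mem _ _ (Submodule.subset_span ⟨0, rfl⟩))
        (Submodule.smul_mem _ _ (Submodule.subset_span ⟨1, rfl⟩)))

lemma obV_zero (v : E2) (hv : ‖v‖ = 1) : obV v hv 0 = v := by
  simp [obV, OrthonormalBasis.coe_mk]

lemma obV_one (v : E2) (hv : ‖v‖ = 1) : obV v hv 1 = rot v := by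
  simp [obV, OrthonormalBasis.coe_mk]

lemma eE_volume_lower (v c : E2) (hv : ‖v‖ = 1) (a b : ℝ) (ha : 0 < a) (hb : 0 < b) :
    ENNReal.ofReal (a * b) ≤ volume (eE v c a b) := by
  classical
  set T := (obV v hv).repr.symm with hT
  set Spi : Set (Fin 2 → ℝ) := Set.univ.pi fun i => Icc (-(![a/2, b/2] i)) (![a/2, b/2] i) with hSpi
  set S : Set E2 := (MeasurableEquiv.toLp 2 (Fin 2 → ℝ)).symm ⁻¹' Spi with hS
  have hSpiMeas : MeasurableSet Spi := MeasurableSet.univ_pi fun i => measurableSet_Icc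
  have hvolSpi : volume Spi = ENNReal.ofReal (a * b) := by
    rw [hSpi, volume_pi_pi]
    rw [Fin.prod_univ_two]
    simp only [Matrix.cons_val_zero, Matrix.cons_val_one, Matrix.head_cons]
    rw [Real.volume_Icc, Real.volume_Icc, ← ENNReal.ofReal_mul (by linarith)]
    congr 1
    ring
  have hvolS : volume S = ENNReal.ofReal (a * b) := by
    rw [hS, (EuclideanSpace.volume_preserving_symm_measurableEquiv_toLp (Fin 2)).measure_preimage
      hSpiMeas.nullMeasurableSet, hvolSpi]
  have hsub : (fun x => c + T x) '' S ⊆ eE v c a b := by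
    rintro _ ⟨x, hx, rfl⟩
    have hx0 : x 0 ∈ Icc (-(a/2)) (a/2) := by
      have := hx (0 : Fin 2) (mem_univ _)
      simpa using this
    have hx1 : x 1 ∈ Icc (-(b/2)) (b/2) := by
      have := hx (1 : Fin 2) (mem_univ _)
      simpa using this
    have hTx : c + T x - c = T x := by abel
    have h0 : ⟪c + T x - c, v⟫ = x 0 := by
      rw [hTx, real_inner_comm, ← obV_zero v hv, ← OrthonormalBasis.repr_apply_apply,
        hT, LinearIsometryEquiv.apply_symm_apply]
    have h1 : ⟪c + T x - c, rot v⟫ = x 1 := by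
      rw [hTx, real_inner_comm, ← obV_one v hv, ← OrthonormalBasis.repr_apply_apply,
        hT, LinearIsometryEquiv.apply_symm_apply]
    show eF v c a b (c + T x) < 0
    rw [eF, h0, h1]
    obtain ⟨hl0, hr0⟩ := hx0
    obtain ⟨hl1, hr1⟩ := hx1
    have e0 : x 0^2 ≤ (a/2)^2 := by nlinarith
    have e1 : x 1^2 ≤ (b/2)^2 := by nlinarith
    nlinarith [mul_le_mul_of_nonneg_left e0 (sq_nonneg b),
      mul_le_mul_of_nonneg_left e1 (sq_nonneg a),
      mul_pos (mul_pos ha ha) (mul_pos hb hb)]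
  have himg : (fun x => c + T x) '' S = c +ᵥ (T '' S) := by
    rw [← Set.image_vadd, ← Set.image_comp]
    rfl
  have hTS : T '' S = (obV v hv).repr ⁻¹' S := by
    ext y
    constructor
    · rintro ⟨x, hx, rfl⟩
      simpa [hT] using hx
    · intro hy
      exact ⟨(obV v hv).repr y, hy, by simp [hT]⟩
  have hvol2 : volume ((fun x => c + T x) '' S) = ENNReal.ofReal (a * b) := by
    rw [himg, measure_vadd, hTS,
      (obV v hv).measurePreserving_repr.measure_preimage ?_, hvolS]
    exact (((MeasurableEquiv.toLp 2 (Fin 2 → ℝ)).symm).measurable hSpiMeas).nullMeasurableSet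
  calc ENNReal.ofReal (a * b) = volume ((fun x => c + T x) '' S) := hvol2.symm
    _ ≤ volume (eE v c a b) := measure_mono hsub

lemma eE_smoothBoundary (v c : E2) (hv : ‖v‖ = 1) (a b : ℝ) (ha : 0 < a) (hb : 0 < b) :
    HasSmoothBoundary (eE v c a b) := by
  intro x hx
  have hxc : x ≠ c := by
    intro h
    rw [(eE_isOpen v c a b).frontier_eq] at hx
    exact hx.2 (h ▸ eE_mem_c v c a b ha hb)
  refine ⟨{c}ᶜ, isClosed_singleton.isOpen_compl, hxc, eF v c a b, eF_contDiff v c a b,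
    fun y _ => Iff.rfl, fun y hy => eF_fderiv_ne_zero v c hv a b ha hb y hy⟩

lemma exists_ray (Ω : Set E2) (hconv : Convex ℝ Ω) (hunb : ¬ Bornology.IsBounded Ω)
    (x0 : E2) (hx0 : x0 ∈ Ω) :
    ∃ v : E2, ‖v‖ = 1 ∧ ∀ t : ℝ, 0 ≤ t → x0 + t • v ∈ closure Ω := by
  have hy : ∀ n : ℕ, ∃ y, y ∈ Ω ∧ (n : ℝ) < ‖y - x0‖ := by
    intro n
    by_contra h
    push_neg at h
    refine hunb ((Metric.isBounded_iff_subset_closedBall x0).mpr ⟨n, fun y hyΩ => ?_⟩)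
    rw [Metric.mem_closedBall, dist_eq_norm]
    exact h y hyΩ
  choose y hyΩ hyn using hy
  have hrpos : ∀ n, (0:ℝ) < ‖y n - x0‖ := fun n => lt_of_le_of_lt (Nat.cast_nonneg n) (hyn n)
  set u : ℕ → E2 := fun n => ‖y n - x0‖⁻¹ • (y n - x0) with hu
  have hunorm : ∀ n, u n ∈ Metric.sphere (0 : E2) 1 := by
    intro n
    rw [mem_sphere_zero_iff_norm, hu, norm_smul, norm_inv, norm_norm]
    exact inv_mul_cancel₀ (hrpos n).ne'
  obtain ⟨v, hvmem, φ, hφ, hlim⟩ := (isCompact_sphere (0 : E2) 1).tendsto_subseq hunorm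
  refine ⟨v, mem_sphere_zero_iff_norm.mp hvmem, fun t ht => ?_⟩
  have hptend : Tendsto (fun n => x0 + t • u (φ n)) atTop (𝓝 (x0 + t • v)) :=
    tendsto_const_nhds.add (hlim.const_smul t)
  refine mem_closure_of_tendsto hptend ?_
  filter_upwards [eventually_ge_atTop (Nat.ceil t)] with n hn
  have htr : t ≤ ‖y (φ n) - x0‖ := by
    calc t ≤ (Nat.ceil t : ℝ) := Nat.le_ceil t
      _ ≤ (n : ℝ) := by exact_mod_cast hn
      _ ≤ (φ n : ℝ) := by exact_mod_cast hφ.le_apply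
      _ ≤ ‖y (φ n) - x0‖ := (hyn (φ n)).le
  set r := ‖y (φ n) - x0‖ with hr
  have hrp : 0 < r := hrpos (φ n)
  have hmem : (1 - t/r) • x0 + (t/r) • y (φ n) ∈ Ω := by
    apply hconv hx0 (hyΩ (φ n))
    · have : t / r ≤ 1 := div_le_one_of_le₀ htr hrp.le
      linarith
    · positivity
    · ring
  have heq : (1 - t/r) • x0 + (t/r) • y (φ n) = x0 + t • u (φ n) := by
    rw [hu]
    simp only [smul_smul, sub_smul, one_smul, smul_sub]
    rw [show t * r⁻¹ = t / r by ring]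
    abel
  rwa [heq] at hmem

lemma stadium_mem (Ω : Set E2) (hΩ : IsOpen Ω) (hconv : Convex ℝ Ω)
    (x0 : E2) (ρ : ℝ) (hρ : 0 < ρ) (hball : Metric.closedBall x0 ρ ⊆ Ω)
    (v : E2) (hray : ∀ t : ℝ, 0 ≤ t → x0 + t • v ∈ closure Ω)
    (s : ℝ) (hs : 0 ≤ s) (u : E2) (hu : ‖u‖ ≤ ρ/2) :
    x0 + s • v + u ∈ Ω := by
  have h1 : x0 + (2:ℝ) • u ∈ interior Ω := by
    rw [hΩ.interior_eq]
    apply hball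
    rw [Metric.mem_closedBall, dist_eq_norm]
    have : x0 + (2:ℝ) • u - x0 = (2:ℝ) • u := by abel
    rw [this, norm_smul]
    simp only [Real.norm_ofNat]
    linarith
  have h2 : x0 + (2*s) • v ∈ closure Ω := hray (2*s) (by linarith)
  have h3 := hconv.combo_interior_closure_mem_interior h1 h2
    (by norm_num : (0:ℝ) < 1/2) (by norm_num : (0:ℝ) ≤ 1/2) (by norm_num)
  rw [hΩ.interior_eq] at h3
  have heq : (1/2 : ℝ) • (x0 + (2:ℝ) • u) + (1/2 : ℝ) • (x0 + (2*s) • v)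
      = x0 + s • v + u := by
    module
  rwa [heq] at h3

open Real in
lemma eE_ratio_bound (v c : E2) (hv : ‖v‖ = 1) (a b : ℝ) (ha : 0 < a) (hb : 0 < b)
    (q : ℝ) (hq0 : 0 < q) :
    cheegerRatio (N := 2) q (eE v c a b) ≤ ((a+b) * (2*π)) / (a*b) ^ (1/q) := by
  have hfin : volume (eE v c a b) ≠ ⊤ := by
    refine ne_top_of_le_ne_top (eE_compact_closure v c hv a b ha hb).measure_lt_top.ne
      (measure_mono subset_closure)
  have hnum : (MeasureTheory.Measure.hausdorffMeasure (((2:ℕ) : ℝ) - 1)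
      (frontier (eE v c a b))).toReal ≤ (a+b) * (2*π) := by
    apply ENNReal.toReal_le_of_le_ofReal (by positivity)
    have h2 : (((2:ℕ) : ℝ) - 1) = (1:ℝ) := by norm_num
    rw [h2]
    exact eE_H1_bound v c hv a b ha hb
  have hden : a * b ≤ (volume (eE v c a b)).toReal := by
    rw [← ENNReal.ofReal_le_iff_le_toReal hfin]
    exact eE_volume_lower v c hv a b ha hb
  have hdenpow : (a*b) ^ (1/q) ≤ (volume (eE v c a b)).toReal ^ (1/q) :=
    Real.rpow_le_rpow (by positivity) hden (by positivity)
  have hpow_pos : (0:ℝ) < (a*b) ^ (1/q) := Real.rpow_pos_of_pos (by positivity) _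
  unfold cheegerRatio
  exact div_le_div₀ (by positivity) hnum hpow_pos hdenpow


/-- for an unbounded open convex set `Ω ⊆ ℝ²` with finite inradius and
`0 < q < 1`, one has `h_q(Ω) = 0`. -/
theorem statement_18 (Ω : Set (EuclideanSpace ℝ (Fin 2)))
    (hΩ : IsOpen Ω) (hconv : Convex ℝ Ω) (hunb : ¬ Bornology.IsBounded Ω)
    (hfin : einradius Ω < ⊤) (q : ℝ) (hq0 : 0 < q) (hq1 : q < 1) :
    cheeger q Ω = 0 := by
  obtain ⟨x0, hx0⟩ : Ω.Nonempty := by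
    rcases Set.eq_empty_or_nonempty Ω with h | h
    · exact absurd (h ▸ Bornology.isBounded_empty) hunb
    · exact h
  obtain ⟨ε0, hε0, hball0⟩ := Metric.isOpen_iff.mp hΩ x0 hx0
  set ρ : ℝ := ε0 / 2 with hρdef
  have hρ : 0 < ρ := by positivity
  have hball : Metric.closedBall x0 ρ ⊆ Ω :=
    (Metric.closedBall_subset_ball (by rw [hρdef]; linarith)).trans hball0
  obtain ⟨v, hv1, hray⟩ := exists_ray Ω hconv hunb x0 hx0
  set b : ℝ := ρ / 2 with hbdef
  have hb : 0 < b := by positivity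
  set Sset := { r : ℝ | ∃ E : Set (EuclideanSpace ℝ (Fin 2)), IsOpen E ∧ E.Nonempty ∧
    IsCompact (closure E) ∧ closure E ⊆ Ω ∧ HasSmoothBoundary E ∧ r = cheegerRatio q E }
    with hSset
  have hlow : ∀ r ∈ Sset, 0 ≤ r := by
    rintro r ⟨E, _, _, _, _, _, rfl⟩
    unfold cheegerRatio
    exact div_nonneg ENNReal.toReal_nonneg (Real.rpow_nonneg ENNReal.toReal_nonneg _)
  have hq' : 1 < 1/q := by
    rw [lt_div_iff₀ hq0]; linarith
  have hkey : ∀ ε : ℝ, 0 < ε → ∃ r ∈ Sset, r < ε := by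
    intro ε hε
    have hT : Tendsto (fun a : ℝ => (4*Real.pi / b^(1/q)) * a ^ (-(1/q - 1))) atTop (𝓝 0) := by
      have h1 := tendsto_rpow_neg_atTop (y := 1/q - 1) (by linarith)
      simpa using h1.const_mul (4*Real.pi / b^(1/q))
    have hev := (hT.eventually_lt_const hε).and (eventually_ge_atTop (max 1 b))
    obtain ⟨a, haε, hab⟩ := hev.exists
    have ha1 : (1:ℝ) ≤ a := le_trans (le_max_left _ _) hab
    have hba : b ≤ a := le_trans (le_max_right _ _) hab
    have ha : 0 < a := lt_of_lt_of_le one_pos ha1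
    set c : E2 := x0 + a • v with hc
    have hclos : closure (eE v c a b) ⊆ Ω := by
      intro p hp
      have hple : eF v c a b p ≤ 0 := eE_closure_subset v c a b hp
      obtain ⟨h1, h2⟩ := eE_abs_le v c a b ha hb p hple
      have hd := decomp v hv1 (p - c)
      have heq : p = x0 + (a + ⟪p - c, v⟫) • v + ⟪p - c, rot v⟫ • rot v := by
        have hpc : p = c + (⟪p - c, v⟫ • v + ⟪p - c, rot v⟫ • rot v) := by
          rw [← hd]; abel
        generalize hS : ⟪p - c, v⟫ = s1 at hpc ⊢
        generalize hTt : ⟪p - c, rot v⟫ = t1 at hpc ⊢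
        rw [hpc, hc]
        module
      rw [heq]
      apply stadium_mem Ω hΩ hconv x0 ρ hρ hball v hray
      · have : -a ≤ ⟪p - c, v⟫ := (abs_le.mp h1).1
        linarith
      · rw [norm_smul, norm_rot, hv1, mul_one, Real.norm_eq_abs]
        rw [← hbdef] at *
        linarith [(abs_le.mp h2).2, abs_nonneg (⟪p - c, rot v⟫)]
    refine ⟨cheegerRatio q (eE v c a b),
      ⟨eE v c a b, eE_isOpen v c a b, ⟨c, eE_mem_c v c a b ha hb⟩,
        eE_compact_closure v c hv1 a b ha hb, hclos,
        eE_smoothBoundary v c hv1 a b ha hb, rfl⟩, ?_⟩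
    calc cheegerRatio q (eE v c a b)
        ≤ ((a+b) * (2*Real.pi)) / (a*b) ^ (1/q) := eE_ratio_bound v c hv1 a b ha hb q hq0
      _ ≤ (4*Real.pi / b^(1/q)) * a ^ (-(1/q - 1)) := by
          have hA : (0:ℝ) < a^(1/q) := Real.rpow_pos_of_pos ha _
          have hB : (0:ℝ) < b^(1/q) := Real.rpow_pos_of_pos hb _
          have hmul : (a*b)^(1/q) = a^(1/q) * b^(1/q) := Real.mul_rpow ha.le hb.le
          have hsub : a ^ (-(1/q - 1)) = a / a^(1/q) := by
            rw [show -(1/q - 1) = 1 - 1/q by ring, Real.rpow_sub ha, Real.rpow_one]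
          rw [hmul, hsub]
          calc ((a+b) * (2*Real.pi)) / (a^(1/q) * b^(1/q))
              ≤ ((2*a) * (2*Real.pi)) / (a^(1/q) * b^(1/q)) := by
                have hnum : (a+b)*(2*Real.pi) ≤ (2*a)*(2*Real.pi) := by nlinarith [Real.pi_pos]
                exact div_le_div₀ (by positivity) hnum (by positivity) le_rfl
            _ = (4*Real.pi / b^(1/q)) * (a / a^(1/q)) := by
                field_simp
                ring
      _ < ε := haε
  have hbdd : BddBelow Sset := ⟨0, fun r hr => hlow r hr⟩
  obtain ⟨r1, hr1, _⟩ := hkey 1 one_pos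
  have hne : Sset.Nonempty := ⟨r1, hr1⟩
  have hle : cheeger q Ω ≤ 0 := by
    by_contra h
    push_neg at h
    obtain ⟨r, hr, hrlt⟩ := hkey _ h
    exact absurd (csInf_le hbdd hr) (not_le.mpr hrlt)
  have hge : 0 ≤ cheeger q Ω := le_csInf hne (fun r hr => hlow r hr)
  exact le_antisymm hle hge


end
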